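/- Let W_1, W_2, ... be independent random variables with W_i distributed Beta(1-α, θ+iα) for parameters 0 ≤ α < 1, θ > -α, and define P_i = W_i ∏_{j<i}(1-W_j). Then for every composition λ = (λ_1,...,λ_k) of n, E[∏_{i=1}^{k} W_i^{λ_i - 1} (1-W_i)^{Λ_{i+1}}] = (∏_{i=1}^{k-1}(θ+iα))/(θ+1)_{n-1} · ∏_{j=1}^{k}(1-α)_{λ_j-1}, where Λ_j = λ_j + λ_{j+1} + ... + λ_k. -/

import Mathlib

open MeasureTheory
open scoped NNReal ENNReal

/-- Rising factorial `(x)_n = x (x+1) ⋯ (x+n-1)`. -/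
noncomputable def risingFac (x : ℝ) (n : ℕ) : ℝ := ∏ i ∈ Finset.range n, (x + i)

/-- The Beta(a,b) distribution on `(0,1)` as a measure on `ℝ`. -/
noncomputable def betaMeas (a b : ℝ) : Measure ℝ :=
  (volume.restrict (Set.Ioo (0:ℝ) 1)).withDensity fun u =>
    ENNReal.ofReal (Real.Gamma (a + b) / (Real.Gamma a * Real.Gamma b) *
      u ^ (a - 1) * (1 - u) ^ (b - 1))

lemma real_beta (a b : ℝ) (ha : 0 < a) (hb : 0 < b) :
    IntegrableOn (fun x : ℝ => x ^ (a - 1) * (1 - x) ^ (b - 1)) (Set.Ioc 0 1) volume ∧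
    ∫ x in Set.Ioc (0:ℝ) 1, x ^ (a - 1) * (1 - x) ^ (b - 1) =
      Real.Gamma a * Real.Gamma b / Real.Gamma (a + b) := by
  have hF : IntervalIntegrable
      (fun x : ℝ => (x : ℂ) ^ ((a : ℂ) - 1) * ((1 : ℂ) - x) ^ ((b : ℂ) - 1)) volume 0 1 :=
    Complex.betaIntegral_convergent (by simpa using ha) (by simpa using hb)
  have hFI : IntegrableOn
      (fun x : ℝ => (x : ℂ) ^ ((a : ℂ) - 1) * ((1 : ℂ) - x) ^ ((b : ℂ) - 1))
      (Set.Ioc 0 1) volume := by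
    simpa [intervalIntegrable_iff_integrableOn_Ioc_of_le] using hF
  have key : ∀ x ∈ Set.Ioc (0:ℝ) 1,
      (x : ℂ) ^ ((a : ℂ) - 1) * ((1 : ℂ) - x) ^ ((b : ℂ) - 1)
        = ((x ^ (a - 1) * (1 - x) ^ (b - 1) : ℝ) : ℂ) := by
    intro x hx
    have hx0 : (0:ℝ) ≤ x := le_of_lt hx.1
    have hx1 : (0:ℝ) ≤ 1 - x := by linarith [hx.2]
    rw [Complex.ofReal_mul, Complex.ofReal_cpow hx0, Complex.ofReal_cpow hx1]
    push_cast
    ring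
  have hInt : IntegrableOn (fun x : ℝ => x ^ (a - 1) * (1 - x) ^ (b - 1)) (Set.Ioc 0 1) volume := by
    have := hFI.re
    refine (integrable_congr ?_).mp this
    refine (ae_restrict_iff' measurableSet_Ioc).2 (Filter.Eventually.of_forall ?_)
    intro x hx
    dsimp only
    rw [key x hx]
    simp
  refine ⟨hInt, ?_⟩
  have h1 : ∫ x in Set.Ioc (0:ℝ) 1, ((x ^ (a - 1) * (1 - x) ^ (b - 1) : ℝ) : ℂ)
      = Complex.betaIntegral a b := by
    rw [Complex.betaIntegral, intervalIntegral.integral_of_le zero_le_one]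
    refine setIntegral_congr_fun measurableSet_Ioc fun x hx => (key x hx).symm
  rw [show ∀ f : ℝ → ℝ, (fun x => ((f x : ℝ) : ℂ)) = (fun x => (RCLike.ofReal (f x) : ℂ)) from fun _ => rfl] at h1
  rw [integral_ofReal] at h1
  have hbeta : Complex.betaIntegral a b =
      ((Real.Gamma a * Real.Gamma b / Real.Gamma (a + b) : ℝ) : ℂ) := by
    have h2 := Complex.Gamma_mul_Gamma_eq_betaIntegral
      (s := (a:ℂ)) (t := (b:ℂ)) (by simpa using ha) (by simpa using hb)
    have hG : Complex.Gamma ((a:ℂ) + b) ≠ 0 := by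
      rw [← Complex.ofReal_add, Complex.Gamma_ofReal]
      exact_mod_cast (Real.Gamma_pos_of_pos (by linarith)).ne'
    rw [show ((a:ℂ) + b) = ((a + b : ℝ) : ℂ) by push_cast; ring,
      Complex.Gamma_ofReal, Complex.Gamma_ofReal, Complex.Gamma_ofReal] at h2
    have hGne : ((Real.Gamma (a + b) : ℝ) : ℂ) ≠ 0 := by
      exact_mod_cast (Real.Gamma_pos_of_pos (by linarith : (0:ℝ) < a + b)).ne'
    have : Complex.betaIntegral a b =
        ((Real.Gamma a : ℂ) * (Real.Gamma b : ℂ)) / ((Real.Gamma (a + b) : ℝ) : ℂ) := by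
      rw [eq_div_iff hGne, mul_comm]; exact h2.symm
    rw [this]; push_cast; ring
  rw [hbeta] at h1
  exact Complex.ofReal_injective h1

lemma risingFac_pos {x : ℝ} (hx : 0 < x) (n : ℕ) : 0 < risingFac x n :=
  Finset.prod_pos fun i _ => by positivity


lemma Gamma_risingFac {x : ℝ} (hx : 0 < x) (n : ℕ) :
    Real.Gamma (x + n) = Real.Gamma x * risingFac x n := by
  induction n with
  | zero => simp [risingFac]
  | succ n ih =>
    have : x + (n + 1 : ℕ) = (x + n) + 1 := by push_cast; ring
    rw [this, Real.Gamma_add_one (by positivity), ih]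
    simp only [risingFac, Finset.prod_range_succ]
    ring

lemma risingFac_succ_left (x : ℝ) (n : ℕ) (hn : 0 < n) :
    risingFac x n = x * risingFac (x + 1) (n - 1) := by
  obtain ⟨m, rfl⟩ : ∃ m, n = m + 1 := ⟨n - 1, by omega⟩
  simp only [Nat.add_sub_cancel, risingFac]
  rw [Finset.prod_range_succ']
  rw [Nat.cast_zero, add_zero, mul_comm]
  congr 1
  exact Finset.prod_congr rfl fun i _ => by push_cast; ring

lemma beta_moment (a b : ℝ) (ha : 0 < a) (hb : 0 < b) (p q : ℕ) :
    Integrable (fun x : ℝ => x ^ p * (1 - x) ^ q) (betaMeas a b) ∧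
    ∫ x, x ^ p * (1 - x) ^ q ∂betaMeas a b =
      risingFac a p * risingFac b q / risingFac (a + b) (p + q) := by
  have hGa := Real.Gamma_pos_of_pos ha
  have hGb := Real.Gamma_pos_of_pos hb
  have hGab := Real.Gamma_pos_of_pos (by linarith : (0:ℝ) < a + b)
  set C := Real.Gamma (a + b) / (Real.Gamma a * Real.Gamma b) with hCdef
  have hC : 0 < C := div_pos hGab (mul_pos hGa hGb)
  set d : ℝ → ℝ≥0 := fun u => (C * u ^ (a - 1) * (1 - u) ^ (b - 1)).toNNReal with hddef
  have hd : Measurable d := by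
    apply Measurable.real_toNNReal
    fun_prop
  have hmeq : betaMeas a b
      = (volume.restrict (Set.Ioo (0:ℝ) 1)).withDensity (fun u => (d u : ℝ≥0∞)) := rfl
  set g : ℝ → ℝ := fun x => x ^ p * (1 - x) ^ q with hgdef
  set A := a + p with hA
  set B := b + q with hB
  have hA0 : 0 < A := by positivity
  have hB0 : 0 < B := by positivity
  have key : ∀ x ∈ Set.Ioo (0:ℝ) 1,
      d x • g x = C * (x ^ (A - 1) * (1 - x) ^ (B - 1)) := by
    intro x hx
    have hx0 : (0:ℝ) < x := hx.1
    have hx1 : (0:ℝ) < 1 - x := by linarith [hx.2]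
    have hnn : 0 ≤ C * x ^ (a - 1) * (1 - x) ^ (b - 1) := by positivity
    have hcoe : (d x : ℝ) = C * x ^ (a - 1) * (1 - x) ^ (b - 1) :=
      Real.coe_toNNReal _ hnn
    have hsmul : d x • g x = (d x : ℝ) * g x := rfl
    rw [hsmul, hcoe, hgdef]
    have e1 : x ^ (a - 1) * x ^ p = x ^ (A - 1) := by
      rw [← Real.rpow_natCast x p, ← Real.rpow_add hx0]
      congr 1
      rw [hA]; ring
    have e2 : (1 - x) ^ (b - 1) * (1 - x) ^ q = (1 - x) ^ (B - 1) := by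
      rw [← Real.rpow_natCast (1 - x) q, ← Real.rpow_add hx1]
      congr 1
      rw [hB]; ring
    calc C * x ^ (a - 1) * (1 - x) ^ (b - 1) * (x ^ p * (1 - x) ^ q)
        = C * ((x ^ (a - 1) * x ^ p) * ((1 - x) ^ (b - 1) * (1 - x) ^ q)) := by ring
      _ = C * (x ^ (A - 1) * (1 - x) ^ (B - 1)) := by rw [e1, e2]
  have hbeta := real_beta A B hA0 hB0
  have hIoo : IntegrableOn (fun x : ℝ => C * (x ^ (A - 1) * (1 - x) ^ (B - 1)))
      (Set.Ioo 0 1) volume := by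
    refine Integrable.const_mul ?_ C
    exact hbeta.1.mono_set Set.Ioo_subset_Ioc_self
  have hint : Integrable (fun x => d x • g x) (volume.restrict (Set.Ioo (0:ℝ) 1)) := by
    refine (integrable_congr ?_).mpr hIoo
    exact (ae_restrict_iff' measurableSet_Ioo).2 (Filter.Eventually.of_forall fun x hx => key x hx)
  constructor
  · rw [hmeq]
    exact (integrable_withDensity_iff_integrable_smul hd).mpr hint
  · rw [hmeq, integral_withDensity_eq_integral_smul hd g]
    rw [setIntegral_congr_fun measurableSet_Ioo key]
    rw [setIntegral_congr_set MeasureTheory.Ioo_ae_eq_Ioc]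
    rw [MeasureTheory.integral_const_mul, hbeta.2]
    have g1 : Real.Gamma A = Real.Gamma a * risingFac a p := Gamma_risingFac ha p
    have g2 : Real.Gamma B = Real.Gamma b * risingFac b q := Gamma_risingFac hb q
    have g3 : Real.Gamma (A + B) = Real.Gamma (a + b) * risingFac (a + b) (p + q) := by
      rw [show A + B = (a + b) + ((p + q : ℕ) : ℝ) by rw [hA, hB]; push_cast; ring]
      exact Gamma_risingFac (by linarith) (p + q)
    rw [g1, g2, g3, hCdef]
    have hrab : risingFac (a + b) (p + q) ≠ 0 := (risingFac_pos (by linarith) _).ne'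
    field_simp

open ProbabilityTheory in
lemma indep_prod_integral {Ω : Type*} [MeasurableSpace Ω] {μ : Measure Ω}
    [IsProbabilityMeasure μ] (g : ℕ → Ω → ℝ) (hmeas : ∀ i, Measurable (g i))
    (hindep : iIndepFun g μ)
    (hint : ∀ i, Integrable (g i) μ) (s : Finset ℕ) :
    Integrable (fun ω => ∏ i ∈ s, g i ω) μ ∧
      ∫ ω, ∏ i ∈ s, g i ω ∂μ = ∏ i ∈ s, ∫ ω, g i ω ∂μ := by
  classical
  induction s using Finset.cons_induction with
  | empty => simp
  | cons i s hi ih =>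
    have hIndep : IndepFun (∏ j ∈ s, g j) (g i) μ :=
      hindep.indepFun_finsetProd_of_notMem hmeas hi
    have hprodeq : (∏ j ∈ s, g j) = fun ω => ∏ j ∈ s, g j ω := by
      ext ω; simp
    rw [hprodeq] at hIndep
    have h1 : Integrable (fun ω => (∏ j ∈ s, g j ω) * g i ω) μ :=
      hIndep.integrable_mul ih.1 (hint i)
    have h2 := hIndep.integral_mul_eq_mul_integral ih.1.aestronglyMeasurable (hint i).aestronglyMeasurable
    constructor
    · refine (integrable_congr (Filter.Eventually.of_forall fun ω => ?_)).mpr h1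
      rw [Finset.prod_cons]; ring
    · rw [Finset.prod_cons,
        show (∫ ω, ∏ j ∈ Finset.cons i s hi, g j ω ∂μ)
          = ∫ ω, (∏ j ∈ s, g j ω) * g i ω ∂μ by
            congr 1; ext ω; rw [Finset.prod_cons]; ring,
        show (∫ ω, (∏ j ∈ s, g j ω) * g i ω ∂μ)
          = ∫ ω, ((fun ω => ∏ j ∈ s, g j ω) * g i) ω ∂μ from rfl,
        h2, ih.2]
      ring

@[simp] lemma risingFac_zero (x : ℝ) : risingFac x 0 = 1 := by simp [risingFac]

lemma tele (b : ℕ → ℝ) (hb : ∀ i, 0 < b i + 1) :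
    ∀ (k : ℕ) (T : ℕ → ℕ), T k = 0 → (∀ i, i < k → T (i+1) < T i) →
    ∏ i ∈ Finset.range k,
        (risingFac (b (i+1)) (T (i+1)) / risingFac (b i + 1) (T i - 1))
      = (∏ i ∈ Finset.range (k-1), b (i+1)) / risingFac (b 0 + 1) (T 0 - 1) := by
  intro k
  induction k with
  | zero => intro T h0 _; simp [h0]
  | succ k ih =>
    rcases k with _ | m
    · intro T hTk _
      simp [hTk]
    · intro T hTk hTd
      have hTm1 : 0 < T (m+1) :=
        Nat.lt_of_le_of_lt (Nat.zero_le _) (hTd (m+1) (by omega))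
      set T' : ℕ → ℕ := Function.update T (m+1) 0 with hT'def
      have hT'k : T' (m+1) = 0 := Function.update_self _ _ _
      have hT'eq : ∀ i, i ≠ m+1 → T' i = T i := fun i h => Function.update_of_ne h _ _
      have hT'd : ∀ i, i < m+1 → T' (i+1) < T' i := by
        intro i hi
        rw [hT'eq i (by omega)]
        by_cases h : i + 1 = m + 1
        · rw [h, hT'k]
          exact Nat.lt_of_le_of_lt (Nat.zero_le _) (hTd i (by omega))
        · rw [hT'eq _ h]
          exact hTd i (by omega)
      have IH := ih T' hT'k hT'd
      have hpos1 : (0:ℝ) < risingFac (b (m+1) + 1) (T (m+1) - 1) := risingFac_pos (hb _) _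
      have hpos0 : (0:ℝ) < risingFac (b m + 1) (T m - 1) := risingFac_pos (hb _) _
      have hprodeq : ∏ i ∈ Finset.range m,
            (risingFac (b (i+1)) (T (i+1)) / risingFac (b i + 1) (T i - 1))
          = ∏ i ∈ Finset.range m,
            (risingFac (b (i+1)) (T' (i+1)) / risingFac (b i + 1) (T' i - 1)) := by
        refine Finset.prod_congr rfl fun i hi => ?_
        have hi' : i < m := Finset.mem_range.mp hi
        rw [hT'eq (i+1) (by omega), hT'eq i (by omega)]
      have hlast : risingFac (b (m+1)) (T (m+1)) / risingFac (b m + 1) (T m - 1) *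
            (risingFac (b (m+2)) (T (m+2)) / risingFac (b (m+1) + 1) (T (m+1) - 1))
          = (risingFac (b (m+1)) (T' (m+1)) / risingFac (b m + 1) (T' m - 1)) * b (m+1) := by
        rw [hTk, hT'k, hT'eq m (by omega), risingFac_zero, risingFac_zero,
          risingFac_succ_left (b (m+1)) (T (m+1)) hTm1]
        field_simp
      calc ∏ i ∈ Finset.range (m+2),
              (risingFac (b (i+1)) (T (i+1)) / risingFac (b i + 1) (T i - 1))
          = (∏ i ∈ Finset.range m,
              (risingFac (b (i+1)) (T (i+1)) / risingFac (b i + 1) (T i - 1)))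
            * (risingFac (b (m+1)) (T (m+1)) / risingFac (b m + 1) (T m - 1))
            * (risingFac (b (m+2)) (T (m+2)) / risingFac (b (m+1) + 1) (T (m+1) - 1)) := by
            rw [Finset.prod_range_succ, Finset.prod_range_succ]
        _ = (∏ i ∈ Finset.range (m+1),
              (risingFac (b (i+1)) (T' (i+1)) / risingFac (b i + 1) (T' i - 1))) * b (m+1) := by
            rw [mul_assoc, hlast, hprodeq, Finset.prod_range_succ]
            ring
        _ = ((∏ i ∈ Finset.range m, b (i+1)) / risingFac (b 0 + 1) (T' 0 - 1)) * b (m+1) := by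
            rw [IH, Nat.add_sub_cancel]
        _ = (∏ i ∈ Finset.range (m+1), b (i+1)) / risingFac (b 0 + 1) (T 0 - 1) := by
            rw [hT'eq 0 (by omega), Finset.prod_range_succ]
            ring

/-- For independent `W_i ∼ Beta(1-α, θ+(i+1)α)` (`i` 0-indexed, so `W_i` here is
`W_{i+1}` of the paper) and a composition `λ` of `n` with `k` parts:
`E[∏_{i=1}^k W_i^{λ_i - 1}(1-W_i)^{Λ_{i+1}}]
  = (∏_{i=1}^{k-1}(θ+iα))/(θ+1)_{n-1} · ∏_j (1-α)_{λ_j-1}`,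
where `Λ_j = λ_j + ⋯ + λ_k`. -/
theorem stick_breaking_moment_formula
    {Ω : Type*} [MeasurableSpace Ω] (μ : Measure Ω) [IsProbabilityMeasure μ]
    (α θ : ℝ) (hα0 : 0 ≤ α) (hα1 : α < 1) (hθ : -α < θ)
    (W : ℕ → Ω → ℝ) (hWm : ∀ i, Measurable (W i))
    (hindep : ProbabilityTheory.iIndepFun W μ)
    (hlaw : ∀ i : ℕ, Measure.map (W i) μ = betaMeas (1 - α) (θ + (i + 1) * α))
    (k : ℕ) (lam : Fin k → ℕ) (hpos : ∀ j, 0 < lam j) :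
    ∫ ω, ∏ i : Fin k,
        (W i ω) ^ (lam i - 1) * (1 - W i ω) ^ (∑ j ∈ Finset.Ioi i, lam j) ∂μ =
      (∏ i ∈ Finset.range (k - 1), (θ + (i + 1) * α)) /
          risingFac (θ + 1) ((∑ j, lam j) - 1) *
        ∏ j, risingFac (1 - α) (lam j - 1) := by
  classical
  set a : ℝ := 1 - α with ha_def
  have ha : 0 < a := by simp only [ha_def]; linarith
  set b : ℕ → ℝ := fun i => θ + i * α with hb_def
  have hb1 : ∀ i, 0 < b i + 1 := by
    intro i
    have : (0:ℝ) ≤ (i:ℝ) * α := by positivity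
    simp only [hb_def]; linarith
  have hbpos : ∀ i : ℕ, 0 < b (i + 1) := by
    intro i
    have : (0:ℝ) ≤ (i:ℝ) * α := by positivity
    simp only [hb_def]; push_cast; linarith
  -- the tail sums
  set T : ℕ → ℕ := fun m => ∑ j ∈ Finset.univ.filter (fun j : Fin k => m ≤ (j:ℕ)), lam j
    with hT_def
  have hTk : T k = 0 := by
    simp only [hT_def]
    rw [Finset.filter_false_of_mem (fun j _ => by omega), Finset.sum_empty]
  have hTstep : ∀ m (h : m < k), T m = lam ⟨m, h⟩ + T (m + 1) := by
    intro m h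
    simp only [hT_def]
    have hins : Finset.univ.filter (fun j : Fin k => m ≤ (j:ℕ))
        = insert ⟨m, h⟩ (Finset.univ.filter (fun j : Fin k => m + 1 ≤ (j:ℕ))) := by
      ext j
      simp only [Finset.mem_filter, Finset.mem_univ, true_and, Finset.mem_insert, Fin.ext_iff]
      omega
    rw [hins, Finset.sum_insert (by simp)]
  have hTd : ∀ i, i < k → T (i + 1) < T i := by
    intro i hi
    have := hTstep i hi
    have := hpos ⟨i, hi⟩
    omega
  have hS : ∀ i : Fin k, (∑ j ∈ Finset.Ioi i, lam j) = T ((i : ℕ) + 1) := by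
    intro i
    simp only [hT_def]
    refine Finset.sum_congr ?_ fun _ _ => rfl
    ext j
    simp only [Finset.mem_Ioi, Finset.mem_filter, Finset.mem_univ, true_and, Fin.lt_def]
    omega
  have hT0 : T 0 = ∑ j, lam j := by
    simp only [hT_def]
    refine Finset.sum_congr ?_ fun _ _ => rfl
    simp
  -- exponents as functions on ℕ
  set e : ℕ → ℕ := fun n => if h : n < k then lam ⟨n, h⟩ - 1 else 0 with he_def
  set f : ℕ → ℕ := fun n => if n < k then T (n + 1) else 0 with hf_def
  set G : ℕ → Ω → ℝ := fun n ω => (W n ω) ^ (e n) * (1 - W n ω) ^ (f n) with hG_def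
  set φ : ℕ → ℝ → ℝ := fun n x => x ^ (e n) * (1 - x) ^ (f n) with hφ_def
  have hφm : ∀ n, Measurable (φ n) := by
    intro n
    exact (measurable_id.pow_const _).mul ((measurable_const.sub measurable_id).pow_const _)
  have hGm : ∀ n, Measurable (G n) := fun n => (hφm n).comp (hWm n)
  have hGindep : ProbabilityTheory.iIndepFun G μ :=
    hindep.comp φ hφm
  have hblaw : ∀ n : ℕ, Measure.map (W n) μ = betaMeas a (b (n + 1)) := by
    intro n
    rw [hlaw n]
    simp only [hb_def]
    congr 2
    push_cast; ring
  have hmom : ∀ n : ℕ,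
      Integrable (φ n) (betaMeas a (b (n + 1))) ∧
      ∫ x, φ n x ∂betaMeas a (b (n + 1)) =
        risingFac a (e n) * risingFac (b (n + 1)) (f n)
          / risingFac (a + b (n + 1)) (e n + f n) :=
    fun n => beta_moment a (b (n + 1)) ha (hbpos n) (e n) (f n)
  have hGint : ∀ n, Integrable (G n) μ := by
    intro n
    have : Integrable (φ n ∘ W n) μ := by
      rw [← integrable_map_measure (hφm n).aestronglyMeasurable (hWm n).aemeasurable,
        hblaw n]
      exact (hmom n).1
    exact this
  have hGval : ∀ n, ∫ ω, G n ω ∂μ =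
      risingFac a (e n) * risingFac (b (n + 1)) (f n)
        / risingFac (a + b (n + 1)) (e n + f n) := by
    intro n
    have : ∫ ω, φ n (W n ω) ∂μ = ∫ x, φ n x ∂Measure.map (W n) μ :=
      (integral_map (hWm n).aemeasurable (hφm n).aestronglyMeasurable).symm
    rw [hG_def]
    simp only [hφ_def] at this
    rw [this, hblaw n, (hmom n).2]
  -- rewrite the integrand
  have hintegrand : ∀ ω, (∏ i : Fin k,
        (W i ω) ^ (lam i - 1) * (1 - W i ω) ^ (∑ j ∈ Finset.Ioi i, lam j))
      = ∏ n ∈ Finset.range k, G n ω := by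
    intro ω
    rw [← Fin.prod_univ_eq_prod_range (fun n => G n ω) k]
    refine Finset.prod_congr rfl fun i _ => ?_
    simp only [hG_def, he_def, hf_def, dif_pos i.isLt, if_pos i.isLt, hS i, Fin.eta]
  rw [show (∫ ω, ∏ i : Fin k,
        (W i ω) ^ (lam i - 1) * (1 - W i ω) ^ (∑ j ∈ Finset.Ioi i, lam j) ∂μ)
      = ∫ ω, ∏ n ∈ Finset.range k, G n ω ∂μ by
        exact integral_congr_ae (Filter.Eventually.of_forall hintegrand)]
  rw [(indep_prod_integral G hGm hGindep hGint (Finset.range k)).2]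
  -- compute the product of integrals
  have hfac : ∀ n ∈ Finset.range k, ∫ ω, G n ω ∂μ =
      risingFac a (e n) *
        (risingFac (b (n + 1)) (T (n + 1)) / risingFac (b n + 1) (T n - 1)) := by
    intro n hn
    have hnk : n < k := Finset.mem_range.mp hn
    have hab : a + b (n + 1) = b n + 1 := by
      simp only [ha_def, hb_def]; push_cast; ring
    have hef : e n + f n = T n - 1 := by
      have h1 := hTstep n hnk
      have h2 := hpos ⟨n, hnk⟩
      simp only [he_def, hf_def, dif_pos hnk, if_pos hnk]
      omega
    rw [hGval n, hab, hef, show f n = T (n + 1) from if_pos hnk, mul_div_assoc]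
  rw [Finset.prod_congr rfl hfac, Finset.prod_mul_distrib,
    tele b hb1 k T hTk hTd]
  have hA : ∏ n ∈ Finset.range k, risingFac a (e n) = ∏ j, risingFac (1 - α) (lam j - 1) := by
    rw [← Fin.prod_univ_eq_prod_range (fun n => risingFac a (e n)) k]
    refine Finset.prod_congr rfl fun i _ => ?_
    simp only [he_def, dif_pos i.isLt, Fin.eta, ha_def]
  have hB : ∏ i ∈ Finset.range (k - 1), b (i + 1)
      = ∏ i ∈ Finset.range (k - 1), (θ + ((i : ℝ) + 1) * α) := by
    refine Finset.prod_congr rfl fun i _ => ?_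
    simp only [hb_def]; push_cast; ring
  have hb0 : b 0 + 1 = θ + 1 := by simp [hb_def]
  rw [hA, hB, hb0, hT0]
  ring
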